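/- arXiv:2005.11911 — 2 statements merged into one kernel-verified Lean document; each statement's English description precedes it below -/
import Mathlib

section
/- The discriminability estimators satisfy 0 ≤ D̃ - D̂ ≤ (s-2)/(2(n-1)s), where D̂ is the sample discriminability and D̃ = (n²s²(s-1) - Σ_{t}Σ_{t'≠t}Σ_i r_{ii}^{tt'})/(ns(s-1)(n-1)s) is the rank-form estimator, with equality D̃ - D̂ = (s-2)/(2(n-1)s) when no ties exist among the within-subject distances δ_{i,i}^{t,t'} for each fixed i, t. -/
open Finset

lemma auxPair (a b : ℝ) :
    (if a < b then (1:ℝ) else 0) + (if b < a then (1:ℝ) else 0) ≤ 1 := by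
  split_ifs with h1 h2 h2 <;> try norm_num
  linarith

lemma auxPairEq (a b : ℝ) (hab : a ≠ b) :
    (if a < b then (1:ℝ) else 0) + (if b < a then (1:ℝ) else 0) = 1 := by
  rcases lt_or_gt_of_ne hab with h | h
  · rw [if_pos h, if_neg (by linarith)]; norm_num
  · rw [if_neg (by linarith), if_pos h]; norm_num

noncomputable def auxS (m : ℕ) (g : Fin m → ℝ) (t : Fin m) : ℝ :=
  ∑ t' ∈ univ.erase t, ∑ t'' ∈ univ.erase t, if g t' < g t'' then (1:ℝ) else 0

lemma auxS_nonneg (m : ℕ) (g : Fin m → ℝ) (t : Fin m) : 0 ≤ auxS m g t := by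
  apply sum_nonneg; intro _ _; apply sum_nonneg; intro _ _; positivity

lemma auxS_two (m : ℕ) (g : Fin m → ℝ) (t : Fin m) :
    2 * auxS m g t = ∑ t' ∈ univ.erase t, ∑ t'' ∈ univ.erase t,
      ((if g t' < g t'' then (1:ℝ) else 0) + (if g t'' < g t' then (1:ℝ) else 0)) := by
  simp only [Finset.sum_add_distrib, auxS, two_mul]
  congr 1
  exact Finset.sum_comm

lemma auxCard (m : ℕ) (t : Fin m) :
    ((univ : Finset (Fin m)).erase t).card = m - 1 := by
  rw [card_erase_of_mem (mem_univ t), card_univ, Fintype.card_fin]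

lemma auxConstSum (m : ℕ) (hm : 2 ≤ m) (t : Fin m) :
    ∑ t' ∈ (univ : Finset (Fin m)).erase t, ∑ t'' ∈ univ.erase t,
      ((1:ℝ) - if t'' = t' then 1 else 0) = ((m:ℝ) - 1) * ((m:ℝ) - 2) := by
  have h1 : ∀ t' ∈ (univ : Finset (Fin m)).erase t,
      (∑ t'' ∈ (univ : Finset (Fin m)).erase t, ((1:ℝ) - if t'' = t' then 1 else 0))
        = ((m:ℝ) - 1) - 1 := by
    intro t' ht'
    rw [Finset.sum_sub_distrib, Finset.sum_const, auxCard,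
        Finset.sum_ite_eq' (univ.erase t) t' (fun _ => (1:ℝ)), if_pos ht',
        nsmul_eq_mul, mul_one, Nat.cast_sub (le_trans one_le_two hm), Nat.cast_one]
  rw [Finset.sum_congr rfl h1, Finset.sum_const, auxCard, nsmul_eq_mul,
      Nat.cast_sub (le_trans one_le_two hm), Nat.cast_one]
  ring

lemma auxS_le (m : ℕ) (hm : 2 ≤ m) (g : Fin m → ℝ) (t : Fin m) :
    2 * auxS m g t ≤ ((m:ℝ) - 1) * ((m:ℝ) - 2) := by
  rw [auxS_two, ← auxConstSum m hm t]
  apply sum_le_sum; intro t' _; apply sum_le_sum; intro t'' _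
  by_cases h : t'' = t'
  · subst h; simp
  · rw [if_neg h]; simpa using auxPair (g t') (g t'')

lemma auxS_eq (m : ℕ) (hm : 2 ≤ m) (g : Fin m → ℝ) (t : Fin m)
    (hnt : ∀ t' t'', t' ≠ t → t'' ≠ t → t' ≠ t'' → g t' ≠ g t'') :
    2 * auxS m g t = ((m:ℝ) - 1) * ((m:ℝ) - 2) := by
  rw [auxS_two, ← auxConstSum m hm t]
  apply Finset.sum_congr rfl; intro t' ht'
  apply Finset.sum_congr rfl; intro t'' ht''
  by_cases h : t'' = t'
  · subst h; simp
  · rw [if_neg h]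
    rw [auxPairEq (g t') (g t'')
      (hnt t' t'' (ne_of_mem_erase ht') (ne_of_mem_erase ht'') (Ne.symm h))]
    norm_num

lemma auxRowSum (m : ℕ) (a : ℝ) (h : Fin m → ℝ) :
    (∑ t'' : Fin m, if a < h t'' then (1:ℝ) else 0)
      + (∑ t'' : Fin m, if h t'' ≤ a then (1:ℝ) else 0) = m := by
  rw [← Finset.sum_add_distrib]
  have h1 : ∀ t'' ∈ (univ : Finset (Fin m)),
      (if a < h t'' then (1:ℝ) else 0) + (if h t'' ≤ a then (1:ℝ) else 0) = 1 := by
    intro t'' _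
    by_cases hb : a < h t''
    · rw [if_pos hb, if_neg (not_le.mpr hb)]; norm_num
    · rw [if_neg hb, if_pos (not_lt.mp hb)]; norm_num
  rw [Finset.sum_congr rfl h1, Finset.sum_const, card_univ, Fintype.card_fin,
      nsmul_eq_mul, mul_one]

/-- with the combined `ns × ns` distance matrix `δ p q` (for
`p, q : Fin n × Fin s`), within-row max-ranks `r p q = #{q' : δ p q' ≤ δ p q}`, the rank-form
estimator `D̃ = (n²s²(s-1) - Σ_t Σ_{t'≠t} Σ_i r_{ii}^{tt'})/(ns(s-1)(n-1)s)` and the sample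
discriminability `D̂` satisfy `0 ≤ D̃ - D̂ ≤ (s-2)/(2(n-1)s)`, with equality
`D̃ - D̂ = (s-2)/(2(n-1)s)` when no ties exist among the within-subject distances
`δ_{i,i}^{t,t'}` for each fixed `i, t`. -/
theorem stmt10 (n s : ℕ) (hn : 2 ≤ n) (hs : 2 ≤ s)
    (δ : Fin n × Fin s → Fin n × Fin s → ℝ)
    (hnonneg : ∀ p q, 0 ≤ δ p q) (hself : ∀ p, δ p p = 0)
    (r : Fin n × Fin s → Fin n × Fin s → ℕ)
    (hr : ∀ p q, r p q = (univ.filter (fun q' => δ p q' ≤ δ p q)).card)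
    (Dtilde Dhat : ℝ)
    (hDtilde : Dtilde = ((n : ℝ) ^ 2 * s ^ 2 * (s - 1) -
        ∑ t : Fin s, ∑ t' ∈ univ.erase t, ∑ i : Fin n, (r (i, t) (i, t') : ℝ)) /
        ((n : ℝ) * s * (s - 1) * (n - 1) * s))
    (hDhat : Dhat = (∑ i : Fin n, ∑ t : Fin s, ∑ t' ∈ univ.erase t,
        ∑ i' ∈ univ.erase i, ∑ t'' : Fin s,
          (if δ (i, t) (i, t') < δ (i, t) (i', t'') then (1 : ℝ) else 0)) /
        ((n : ℝ) * s * (s - 1) * (n - 1) * s)) :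
    (0 ≤ Dtilde - Dhat ∧ Dtilde - Dhat ≤ ((s : ℝ) - 2) / (2 * (n - 1) * s)) ∧
      ((∀ (i : Fin n) (t t' t'' : Fin s), t' ≠ t'' → t' ≠ t → t'' ≠ t →
          δ (i, t) (i, t') ≠ δ (i, t) (i, t'')) →
        Dtilde - Dhat = ((s : ℝ) - 2) / (2 * (n - 1) * s)) := by
  classical
  have hsR : (2:ℝ) ≤ s := by exact_mod_cast hs
  have hnR : (2:ℝ) ≤ n := by exact_mod_cast hn
  have hs0 : (0:ℝ) < s := by linarith
  have hn0 : (0:ℝ) < n := by linarith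
  have hs1R : (0:ℝ) < (s:ℝ) - 1 := by linarith
  have hn1R : (0:ℝ) < (n:ℝ) - 1 := by linarith
  have hNpos : (0:ℝ) < (n : ℝ) * s * ((s:ℝ) - 1) * ((n:ℝ) - 1) * s := by positivity
  -- r as a real sum of indicators
  have hr_real : ∀ (i : Fin n) (t t' : Fin s), (r (i,t) (i,t') : ℝ) =
      ∑ i' : Fin n, ∑ t'' : Fin s,
        (if δ (i,t) (i',t'') ≤ δ (i,t) (i,t') then (1:ℝ) else 0) := by
    intro i t t'
    rw [hr, Finset.card_filter]
    push_cast
    rw [Fintype.sum_prod_type]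
  -- key pointwise identity
  have key : ∀ (i : Fin n) (t t' : Fin s),
      (n:ℝ) * s - (r (i,t) (i,t') : ℝ)
        - (∑ i' ∈ univ.erase i, ∑ t'' : Fin s,
            (if δ (i,t) (i,t') < δ (i,t) (i',t'') then (1:ℝ) else 0))
      = ∑ t'' : Fin s, (if δ (i,t) (i,t') < δ (i,t) (i,t'') then (1:ℝ) else 0) := by
    intro i t t'
    have hA : ∀ i' : Fin n,
        (∑ t'' : Fin s, if δ (i,t) (i,t') < δ (i,t) (i',t'') then (1:ℝ) else 0)
        + (∑ t'' : Fin s, if δ (i,t) (i',t'') ≤ δ (i,t) (i,t') then (1:ℝ) else 0)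
        = s := fun i' => auxRowSum s _ _
    have hsplit : (r (i,t) (i,t') : ℝ) =
        (∑ t'' : Fin s, if δ (i,t) (i,t'') ≤ δ (i,t) (i,t') then (1:ℝ) else 0)
        + ∑ i' ∈ univ.erase i, ∑ t'' : Fin s,
            (if δ (i,t) (i',t'') ≤ δ (i,t) (i,t') then (1:ℝ) else 0) := by
      rw [hr_real, ← Finset.add_sum_erase univ _ (mem_univ i)]
    have hErase : (∑ i' ∈ univ.erase i, ∑ t'' : Fin s,
          (if δ (i,t) (i,t') < δ (i,t) (i',t'') then (1:ℝ) else 0))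
        + (∑ i' ∈ univ.erase i, ∑ t'' : Fin s,
          (if δ (i,t) (i',t'') ≤ δ (i,t) (i,t') then (1:ℝ) else 0))
        = ((n:ℝ) - 1) * s := by
      rw [← Finset.sum_add_distrib, Finset.sum_congr rfl (fun i' _ => hA i'),
          Finset.sum_const, auxCard, nsmul_eq_mul,
          Nat.cast_sub (le_trans one_le_two hn), Nat.cast_one]
    have hring : (n:ℝ) * s = ((n:ℝ) - 1) * s + s := by ring
    linarith [hA i]
  -- drop the t'' = t term
  have hdrop : ∀ (i : Fin n) (t t' : Fin s),
      (∑ t'' : Fin s, if δ (i,t) (i,t') < δ (i,t) (i,t'') then (1:ℝ) else 0)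
      = ∑ t'' ∈ univ.erase t, (if δ (i,t) (i,t') < δ (i,t) (i,t'') then (1:ℝ) else 0) := by
    intro i t t'
    rw [← Finset.add_sum_erase univ _ (mem_univ t), hself (i,t),
        if_neg (not_lt.mpr (hnonneg _ _)), zero_add]
  -- the constant-sum count
  have hconst : ∑ i : Fin n, ∑ t : Fin s, ∑ t' ∈ (univ : Finset (Fin s)).erase t,
      ((n:ℝ) * s) = (n:ℝ) ^ 2 * s ^ 2 * ((s:ℝ) - 1) := by
    simp only [Finset.sum_const, auxCard, card_univ, Fintype.card_fin, nsmul_eq_mul,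
      Nat.cast_sub (le_trans one_le_two hs), Nat.cast_one]
    ring
  -- swap sums
  have hswap : ∑ i : Fin n, ∑ t : Fin s, ∑ t' ∈ univ.erase t, (r (i,t) (i,t') : ℝ)
      = ∑ t : Fin s, ∑ t' ∈ univ.erase t, ∑ i : Fin n, (r (i,t) (i,t') : ℝ) := by
    rw [Finset.sum_comm]
    exact Finset.sum_congr rfl fun t _ => Finset.sum_comm
  -- main identity
  have hmain : Dtilde - Dhat =
      (∑ i : Fin n, ∑ t : Fin s, auxS s (fun t'' => δ (i,t) (i,t'')) t) /
        ((n : ℝ) * s * ((s:ℝ) - 1) * ((n:ℝ) - 1) * s) := by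
    rw [hDtilde, hDhat, div_sub_div_same]
    congr 1
    rw [← hswap, ← hconst]
    simp only [← Finset.sum_sub_distrib]
    apply Finset.sum_congr rfl; intro i _
    apply Finset.sum_congr rfl; intro t _
    apply Finset.sum_congr rfl; intro t' _
    rw [key i t t', hdrop i t t']
  refine ⟨⟨?_, ?_⟩, ?_⟩
  · rw [hmain]
    apply div_nonneg _ hNpos.le
    apply sum_nonneg; intro i _
    apply sum_nonneg; intro t _
    exact auxS_nonneg s _ t
  · rw [hmain]
    have hb : (∑ i : Fin n, ∑ t : Fin s, auxS s (fun t'' => δ (i,t) (i,t'')) t)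
        ≤ (n:ℝ) * s * (((s:ℝ) - 1) * ((s:ℝ) - 2) / 2) := by
      calc (∑ i : Fin n, ∑ t : Fin s, auxS s (fun t'' => δ (i,t) (i,t'')) t)
          ≤ ∑ _i : Fin n, ∑ _t : Fin s, (((s:ℝ) - 1) * ((s:ℝ) - 2) / 2) := by
            apply sum_le_sum; intro i _; apply sum_le_sum; intro t _
            have := auxS_le s hs (fun t'' => δ (i,t) (i,t'')) t
            linarith
        _ = (n:ℝ) * s * (((s:ℝ) - 1) * ((s:ℝ) - 2) / 2) := by
            simp only [Finset.sum_const, card_univ, Fintype.card_fin, nsmul_eq_mul]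
            ring
    calc (∑ i : Fin n, ∑ t : Fin s, auxS s (fun t'' => δ (i,t) (i,t'')) t) /
          ((n : ℝ) * s * ((s:ℝ) - 1) * ((n:ℝ) - 1) * s)
        ≤ ((n:ℝ) * s * (((s:ℝ) - 1) * ((s:ℝ) - 2) / 2)) /
          ((n : ℝ) * s * ((s:ℝ) - 1) * ((n:ℝ) - 1) * s) := by
          apply div_le_div_of_nonneg_right hb hNpos.le
      _ = ((s : ℝ) - 2) / (2 * ((n:ℝ) - 1) * s) := by
          field_simp
  · intro hties
    rw [hmain]
    have hb : (∑ i : Fin n, ∑ t : Fin s, auxS s (fun t'' => δ (i,t) (i,t'')) t)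
        = (n:ℝ) * s * (((s:ℝ) - 1) * ((s:ℝ) - 2) / 2) := by
      have h1 : ∀ (i : Fin n), ∀ t ∈ (univ : Finset (Fin s)),
          auxS s (fun t'' => δ (i,t) (i,t'')) t = ((s:ℝ) - 1) * ((s:ℝ) - 2) / 2 := by
        intro i t _
        have := auxS_eq s hs (fun t'' => δ (i,t) (i,t'')) t
          (fun t' t'' ht' ht'' hne => hties i t t' t'' hne ht' ht'')
        linarith
      rw [Finset.sum_congr rfl (fun i _ => Finset.sum_congr rfl (h1 i))]
      simp only [Finset.sum_const, card_univ, Fintype.card_fin, nsmul_eq_mul]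
      ring
    rw [hb]
    field_simp
end

section
/- With H = [[2Σ, -Σ],[Σ, -2Σ - 2Σ_μ]] for positive definite l×l matrices Σ and Σ_μ, the absolute value of the sum of the negative eigenvalues of H, V₂ = |σ₋(H)|, satisfies tr((3/2)Σ + 2Σ_μ) ≤ V₂ ≤ tr(2Σ + 2Σ_μ). -/
open Matrix Finset

section Helpers

variable {n : Type*} [Fintype n] [DecidableEq n]

lemma myDiagNonneg {M : Matrix n n ℝ} (hM : M.PosSemidef) (i : n) : 0 ≤ M i i := by
  have := hM.dotProduct_mulVec_nonneg (Pi.single i 1); simpa using this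

lemma myCharpolyConj (Q M : Matrix n n ℝ) (hQ : IsUnit Q) :
    (Q * M * Q⁻¹).charpoly = M.charpoly := by
  have hdet : IsUnit Q.det := (isUnit_iff_isUnit_det Q).mp hQ
  have h2 : Q.map Polynomial.C * (Q⁻¹).map Polynomial.C = 1 := by
    rw [← Matrix.map_mul, Matrix.mul_nonsing_inv _ hdet, Matrix.map_one _ (map_zero _) (map_one _)]
  have h1 : charmatrix (Q * M * Q⁻¹) =
      Q.map Polynomial.C * charmatrix M * (Q⁻¹).map Polynomial.C := by
    unfold charmatrix
    rw [Matrix.mul_sub, Matrix.sub_mul]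
    congr 1
    · rw [mul_assoc,
        (Matrix.scalar_commute Polynomial.X (fun r => Commute.all Polynomial.X r)
          ((Q⁻¹).map Polynomial.C)).eq,
        ← mul_assoc, h2, one_mul]
    · simp only [RingHom.mapMatrix_apply]
      rw [Matrix.map_mul, Matrix.map_mul]
  have hdet2 : (Q.map Polynomial.C).det * ((Q⁻¹).map Polynomial.C).det = 1 := by
    rw [← det_mul, h2, det_one]
  unfold Matrix.charpoly
  rw [h1, det_mul, det_mul, mul_right_comm, hdet2, one_mul]

lemma myCharpolyDiagonal (d : n → ℝ) :
    (diagonal d).charpoly = ∏ i, (Polynomial.X - Polynomial.C (d i)) := by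
  have : charmatrix (diagonal d) = diagonal fun i => Polynomial.X - Polynomial.C (d i) := by
    ext i j
    by_cases h : i = j
    · subst h; simp [charmatrix_apply_eq]
    · simp [charmatrix_apply_ne _ _ _ h, diagonal_apply_ne _ h, h]
  rw [Matrix.charpoly, this, det_diagonal]

lemma myMultisetEq {d e : n → ℝ}
    (h : (∏ i, (Polynomial.X - Polynomial.C (d i))) =
      ∏ i, (Polynomial.X - Polynomial.C (e i))) :
    Multiset.map d Finset.univ.val = Multiset.map e Finset.univ.val := by
  have key : ∀ f : n → ℝ, (∏ i, (Polynomial.X - Polynomial.C (f i))) =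
      ((Multiset.map f Finset.univ.val).map fun a => Polynomial.X - Polynomial.C a).prod := by
    intro f
    rw [Multiset.map_map]
    rfl
  have := congrArg Polynomial.roots h
  rwa [key d, key e, Polynomial.roots_multiset_prod_X_sub_C,
    Polynomial.roots_multiset_prod_X_sub_C] at this

lemma myFilterSum {d e : n → ℝ}
    (h : Multiset.map d Finset.univ.val = Multiset.map e Finset.univ.val) :
    ∑ i ∈ univ.filter (fun i => d i < 0), d i = ∑ i ∈ univ.filter (fun i => e i < 0), e i := by
  classical
  have key : ∀ f : n → ℝ, ∑ i ∈ univ.filter (fun i => f i < 0), f i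
      = ((Multiset.map f Finset.univ.val).filter (fun x => x < 0)).sum := by
    intro f
    rw [Multiset.filter_map, Finset.sum]
    congr 1
  rw [key, key, h]

lemma mySmulPsd {M : Matrix n n ℝ} (hM : M.PosSemidef) {c : ℝ} (hc : 0 ≤ c) :
    (c • M).PosSemidef := by
  refine .of_dotProduct_mulVec_nonneg ?_ ?_
  · unfold Matrix.IsHermitian
    rw [conjTranspose_smul, hM.1]
    rfl
  · intro x
    rw [smul_mulVec, dotProduct_smul, smul_eq_mul]
    exact mul_nonneg hc (hM.dotProduct_mulVec_nonneg x)

section spectral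
variable {X : Matrix n n ℝ} (hX : X.IsHermitian)

lemma negsum_le_trace_mul {P : Matrix n n ℝ} (hP : P.PosSemidef) (hP1 : (1 - P).PosSemidef) :
    ∑ i ∈ univ.filter (fun i => hX.eigenvalues i < 0), hX.eigenvalues i ≤ (X * P).trace := by
  set U : Matrix n n ℝ := (hX.eigenvectorUnitary : Matrix n n ℝ) with hU
  have hUU : star U * U = 1 := by simp [hU]
  have hUU' : U * star U = 1 := by simp [hU]
  have hspec : X = U * diagonal hX.eigenvalues * star U := by
    have := hX.spectral_theorem; rw [Unitary.conjStarAlgAut_apply] at this; exact this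
  set Qm : Matrix n n ℝ := star U * P * U with hQm
  have hQpsd : Qm.PosSemidef := by
    have := hP.conjTranspose_mul_mul_same U
    simpa [hQm, Matrix.star_eq_conjTranspose] using this
  have hQ1psd : (1 - Qm).PosSemidef := by
    have := hP1.conjTranspose_mul_mul_same U
    have e : Uᴴ * (1 - P) * U = 1 - Qm := by
      rw [Matrix.mul_sub, Matrix.sub_mul, Matrix.mul_one]
      rw [show (Uᴴ : Matrix n n ℝ) = star U from rfl, hUU]
    rwa [e] at this
  have hq0 : ∀ i, 0 ≤ Qm i i := myDiagNonneg hQpsd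
  have hq1 : ∀ i, Qm i i ≤ 1 := by
    intro i
    have := myDiagNonneg hQ1psd i
    simpa [Matrix.sub_apply, Matrix.one_apply] using this
  have htr : (X * P).trace = ∑ i, hX.eigenvalues i * Qm i i := by
    calc (X * P).trace = (U * (diagonal hX.eigenvalues * (star U * P)) ).trace := by
          conv_lhs => rw [hspec]
          simp only [Matrix.mul_assoc]
      _ = ((diagonal hX.eigenvalues * (star U * P)) * U).trace := trace_mul_comm _ _
      _ = (diagonal hX.eigenvalues * Qm).trace := by
          rw [hQm]; simp only [Matrix.mul_assoc]
      _ = ∑ i, hX.eigenvalues i * Qm i i := by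
          simp [Matrix.trace, Matrix.diag, Matrix.diagonal_mul]
  rw [htr, Finset.sum_filter]
  apply Finset.sum_le_sum
  intro i _
  by_cases h : hX.eigenvalues i < 0
  · simp only [h, if_pos]
    calc hX.eigenvalues i = hX.eigenvalues i * 1 := (mul_one _).symm
      _ ≤ hX.eigenvalues i * Qm i i := by
          apply mul_le_mul_of_nonpos_left (hq1 i) h.le
  · simp only [h, if_neg, if_false]
    exact mul_nonneg (not_lt.mp h) (hq0 i)

lemma exists_negsum_eq :
    ∃ P : Matrix n n ℝ, P.PosSemidef ∧ (1 - P).PosSemidef ∧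
      (X * P).trace = ∑ i ∈ univ.filter (fun i => hX.eigenvalues i < 0), hX.eigenvalues i := by
  classical
  set U : Matrix n n ℝ := (hX.eigenvectorUnitary : Matrix n n ℝ) with hU
  have hUU : star U * U = 1 := by simp [hU]
  have hUU' : U * star U = 1 := by simp [hU]
  have hspec : X = U * diagonal hX.eigenvalues * star U := by
    have := hX.spectral_theorem; rw [Unitary.conjStarAlgAut_apply] at this; exact this
  set e : n → ℝ := fun i => if hX.eigenvalues i < 0 then 1 else 0 with he
  refine ⟨U * diagonal e * star U, ?_, ?_, ?_⟩
  · have hd : (diagonal e).PosSemidef :=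
      .diagonal (by intro i; by_cases h : hX.eigenvalues i < 0 <;> simp [he, h])
    have := hd.mul_mul_conjTranspose_same U
    simpa [Matrix.star_eq_conjTranspose] using this
  · have hd : (diagonal (fun i => 1 - e i)).PosSemidef :=
      .diagonal (by intro i; by_cases h : hX.eigenvalues i < 0 <;> simp [he, h])
    have := hd.mul_mul_conjTranspose_same U
    have eq1 : U * diagonal (fun i => 1 - e i) * Uᴴ = 1 - U * diagonal e * star U := by
      have : diagonal (fun i => 1 - e i) = 1 - diagonal e := by
        rw [← diagonal_one, diagonal_sub]
      rw [this, Matrix.mul_sub, Matrix.mul_one, Matrix.sub_mul,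
        show (Uᴴ : Matrix n n ℝ) = star U from rfl, hUU']
    rwa [eq1] at this
  · calc (X * (U * diagonal e * star U)).trace
        = (U * (diagonal hX.eigenvalues * (star U * (U * (diagonal e * star U))))).trace := by
          conv_lhs => rw [hspec]
          simp only [Matrix.mul_assoc]
      _ = ((diagonal hX.eigenvalues * (star U * (U * (diagonal e * star U)))) * U).trace :=
          trace_mul_comm _ _
      _ = (diagonal hX.eigenvalues * diagonal e).trace := by
          rw [← Matrix.mul_assoc (star U) U, hUU, Matrix.one_mul]
          simp only [Matrix.mul_assoc, hUU, Matrix.mul_one]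
      _ = ∑ i, hX.eigenvalues i * e i := by
          simp [diagonal_mul_diagonal, Matrix.trace, Matrix.diag]
      _ = ∑ i ∈ univ.filter (fun i => hX.eigenvalues i < 0), hX.eigenvalues i := by
          rw [Finset.sum_filter]
          congr 1; ext i
          by_cases h : hX.eigenvalues i < 0 <;> simp [he, h]
end spectral

end Helpers

section Blocks

variable {m p : Type*} [Fintype m] [DecidableEq m] [Fintype p] [DecidableEq p]

lemma myPsdBlocks {A : Matrix m m ℝ} {D : Matrix p p ℝ}
    (hA : A.PosSemidef) (hD : D.PosSemidef) : (fromBlocks A 0 0 D).PosSemidef := by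
  refine .of_dotProduct_mulVec_nonneg ?_ ?_
  · unfold Matrix.IsHermitian
    rw [fromBlocks_conjTranspose, hA.1, hD.1]
    simp
  · intro x
    rw [← Sum.elim_comp_inl_inr x, fromBlocks_mulVec]
    simp only [zero_mulVec, add_zero, zero_add, Function.star_sumElim,
      sumElim_dotProduct_sumElim]
    exact add_nonneg (hA.dotProduct_mulVec_nonneg _) (hD.dotProduct_mulVec_nonneg _)

lemma myPdBlocks {A : Matrix m m ℝ} {D : Matrix p p ℝ}
    (hA : A.PosDef) (hD : D.PosDef) : (fromBlocks A 0 0 D).PosDef := by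
  refine .of_dotProduct_mulVec_pos ?_ ?_
  · unfold Matrix.IsHermitian
    rw [fromBlocks_conjTranspose, hA.1, hD.1]
    simp
  · intro x hx
    rw [← Sum.elim_comp_inl_inr x, fromBlocks_mulVec]
    simp only [zero_mulVec, add_zero, zero_add, Function.star_sumElim,
      sumElim_dotProduct_sumElim]
    have hor : x ∘ Sum.inl ≠ 0 ∨ x ∘ Sum.inr ≠ 0 := by
      by_contra h
      push_neg at h
      apply hx
      ext i
      cases i with
      | inl i => exact congrFun h.1 i
      | inr i => exact congrFun h.2 i
    rcases hor with h | h
    · exact add_pos_of_pos_of_nonneg (hA.dotProduct_mulVec_pos h) (hD.posSemidef.dotProduct_mulVec_nonneg _)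
    · exact add_pos_of_nonneg_of_pos (hA.posSemidef.dotProduct_mulVec_nonneg _) (hD.dotProduct_mulVec_pos h)

lemma myTraceCmul (M : Matrix (m ⊕ m) (m ⊕ m) ℝ) :
    ((fromBlocks (1 : Matrix m m ℝ) 0 0 (-1) : Matrix (m ⊕ m) (m ⊕ m) ℝ) * M).trace
      = ∑ i, M (Sum.inl i) (Sum.inl i) - ∑ i, M (Sum.inr i) (Sum.inr i) := by
  simp only [Matrix.trace, Matrix.diag, Matrix.mul_apply, Fintype.sum_sum_type,
    fromBlocks_apply₁₁, fromBlocks_apply₁₂, fromBlocks_apply₂₁, fromBlocks_apply₂₂,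
    Matrix.one_apply, Matrix.zero_apply, Matrix.neg_apply, zero_mul, ite_mul, one_mul,
    Finset.sum_ite_eq, Finset.mem_univ, if_true, Finset.sum_const_zero, add_zero, zero_add,
    neg_mul, neg_neg]
  rw [sub_eq_add_neg, ← Finset.sum_neg_distrib]
  congr 1 <;> (apply Finset.sum_congr rfl; intro i _) <;> simp [Matrix.one_apply]

end Blocks

set_option maxHeartbeats 2000000 in
theorem stmt15 (l : ℕ) (hl : 0 < l) (S Sμ : Matrix (Fin l) (Fin l) ℝ)
    (hS : S.PosDef) (hSμ : Sμ.PosDef)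
    (H : Matrix (Fin l ⊕ Fin l) (Fin l ⊕ Fin l) ℝ)
    (hH : H = Matrix.fromBlocks (2 • S) (-S) S (-(2 • S) - 2 • Sμ))
    (d : Fin l ⊕ Fin l → ℝ) (Q : Matrix (Fin l ⊕ Fin l) (Fin l ⊕ Fin l) ℝ)
    (hQ : IsUnit Q) (hdiag : H = Q * Matrix.diagonal d * Q⁻¹)
    (V₂ : ℝ) (hV₂ : V₂ = -(∑ i ∈ univ.filter (fun i => d i < 0), d i)) :
    ((3 / 2 : ℝ) • S + 2 • Sμ).trace ≤ V₂ ∧ V₂ ≤ ((2 : ℝ) • S + 2 • Sμ).trace := by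
  classical
  set Bm : Matrix (Fin l ⊕ Fin l) (Fin l ⊕ Fin l) ℝ :=
    fromBlocks (2 • S) (-S) (-S) (2 • S + 2 • Sμ) with hBm
  set Cm : Matrix (Fin l ⊕ Fin l) (Fin l ⊕ Fin l) ℝ :=
    fromBlocks (1 : Matrix (Fin l) (Fin l) ℝ) 0 0 (-1) with hCm
  have hSsymm : Sᴴ = S := hS.1
  have hSμsymm : Sμᴴ = Sμ := hSμ.1
  -- H = Cm * Bm
  have hCB : H = Cm * Bm := by
    rw [hH, hCm, hBm, fromBlocks_multiply, fromBlocks_inj]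
    refine ⟨by simp, by simp, by simp, ?_⟩
    simp only [Matrix.zero_mul, Matrix.neg_mul, Matrix.one_mul, zero_add]
    module
  -- Bm is positive definite
  have psd2Sμ : ((2 : ℕ) • Sμ).PosSemidef := by
    rw [two_smul]; exact hSμ.posSemidef.add hSμ.posSemidef
  have hB : Bm.PosDef := by
    have blockPD : (fromBlocks S 0 0 (S + 2 • Sμ)).PosDef :=
      myPdBlocks hS (hS.add_posSemidef psd2Sμ)
    set N : Matrix (Fin l ⊕ Fin l) (Fin l ⊕ Fin l) ℝ :=
      fromBlocks 1 (-1) 0 1 with hN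
    have psdG : (fromBlocks S 0 0 (0 : Matrix (Fin l) (Fin l) ℝ)).PosSemidef :=
      myPsdBlocks hS.posSemidef .zero
    have conj := psdG.conjTranspose_mul_mul_same N
    have hNG : Nᴴ * (fromBlocks S 0 0 (0 : Matrix (Fin l) (Fin l) ℝ)) * N
        = fromBlocks S (-S) (-S) S := by
      rw [hN, fromBlocks_conjTranspose, fromBlocks_multiply, fromBlocks_multiply]
      congr 1 <;> simp [hSsymm]
    rw [hNG] at conj
    have hBsum : Bm = fromBlocks S 0 0 (S + 2 • Sμ) + fromBlocks S (-S) (-S) S := by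
      rw [hBm, fromBlocks_add, fromBlocks_inj]
      exact ⟨by module, by module, by module, by module⟩
    rw [hBsum]
    exact blockPD.add_posSemidef conj
  have hBp : Bm.PosSemidef := hB.posSemidef
  set Sq : Matrix (Fin l ⊕ Fin l) (Fin l ⊕ Fin l) ℝ := (open scoped MatrixOrder in CFC.sqrt Bm) with hSq
  have hSqpsd : Sq.PosSemidef := by open scoped MatrixOrder in exact (CFC.sqrt_nonneg Bm).posSemidef
  have hSqh : Sqᴴ = Sq := hSqpsd.1
  have hSq2 : Sq * Sq = Bm := by open scoped MatrixOrder in exact CFC.sqrt_mul_sqrt_self Bm hBp.nonneg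
  have hSqdet : IsUnit Sq.det := by
    rw [isUnit_iff_ne_zero]
    intro h0
    have : Bm.det = 0 := by rw [← hSq2, det_mul, h0, mul_zero]
    exact hB.det_pos.ne' this
  have hSqUnit : IsUnit Sq := (isUnit_iff_isUnit_det _).mpr hSqdet
  have hSqi1 : Sq * Sq⁻¹ = 1 := mul_nonsing_inv _ hSqdet
  have hSqi2 : Sq⁻¹ * Sq = 1 := nonsing_inv_mul _ hSqdet
  have hSqih : (Sq⁻¹)ᴴ = Sq⁻¹ := (Matrix.IsHermitian.inv hSqpsd.1)
  set X : Matrix (Fin l ⊕ Fin l) (Fin l ⊕ Fin l) ℝ := Sq * Cm * Sq with hX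
  have hCmh : Cmᴴ = Cm := by
    rw [hCm, fromBlocks_conjTranspose]
    simp
  have hXh : X.IsHermitian := by
    unfold Matrix.IsHermitian
    rw [hX, conjTranspose_mul, conjTranspose_mul, hSqh, hCmh, Matrix.mul_assoc]
  -- X is similar to diagonal d
  have hXd : X = (Sq * Q) * diagonal d * (Sq * Q)⁻¹ := by
    have h1 : X = Sq * H * Sq⁻¹ := by
      rw [hCB, hX]
      calc Sq * Cm * Sq = Sq * Cm * (Sq * (Sq * Sq⁻¹)) := by rw [hSqi1, Matrix.mul_one]
        _ = Sq * (Cm * (Sq * Sq)) * Sq⁻¹ := by simp only [Matrix.mul_assoc]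
        _ = Sq * (Cm * Bm) * Sq⁻¹ := by rw [hSq2]
    rw [h1, hdiag, Matrix.mul_inv_rev]
    simp only [Matrix.mul_assoc]
  -- charpoly equalities
  have hc1 : X.charpoly = (diagonal d).charpoly := by
    rw [hXd]
    exact myCharpolyConj _ _ (hSqUnit.mul hQ)
  have hc2 : X.charpoly = (diagonal hXh.eigenvalues).charpoly := by
    set U : Matrix (Fin l ⊕ Fin l) (Fin l ⊕ Fin l) ℝ :=
      (hXh.eigenvectorUnitary : Matrix (Fin l ⊕ Fin l) (Fin l ⊕ Fin l) ℝ) with hU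
    have hUU : star U * U = 1 := by simp [hU]
    have hUU' : U * star U = 1 := by simp [hU]
    have hUinv : U⁻¹ = star U := Matrix.inv_eq_left_inv hUU
    have hspec : X = U * diagonal hXh.eigenvalues * star U := by
      have := hXh.spectral_theorem; rw [Unitary.conjStarAlgAut_apply] at this; exact this
    conv_lhs => rw [hspec, ← hUinv]
    exact myCharpolyConj _ _ ⟨⟨U, star U, hUU', hUU⟩, rfl⟩
  have hms : Multiset.map d Finset.univ.val = Multiset.map hXh.eigenvalues Finset.univ.val := by
    apply myMultisetEq
    rw [← myCharpolyDiagonal, ← myCharpolyDiagonal, ← hc2, hc1]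
  have hsum : ∑ i ∈ univ.filter (fun i => d i < 0), d i
      = ∑ i ∈ univ.filter (fun i => hXh.eigenvalues i < 0), hXh.eigenvalues i :=
    myFilterSum hms
  -- Upper bound for V₂ : σ₋ ≥ -(2 S.trace + 2 Sμ.trace)
  obtain ⟨P, hPpsd, hP1psd, hPeq⟩ := exists_negsum_eq hXh
  have hRub : -(2 * S.trace + 2 * Sμ.trace) ≤ ∑ i ∈ univ.filter (fun i => hXh.eigenvalues i < 0),
      hXh.eigenvalues i := by
    set R : Matrix (Fin l ⊕ Fin l) (Fin l ⊕ Fin l) ℝ := Sq * P * Sq with hR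
    have hRpsd : R.PosSemidef := by
      have := hPpsd.conjTranspose_mul_mul_same Sq
      rwa [hSqh] at this
    have hBR : (Bm - R).PosSemidef := by
      have := hP1psd.conjTranspose_mul_mul_same Sq
      rw [hSqh] at this
      have e : Sq * (1 - P) * Sq = Bm - R := by
        rw [Matrix.mul_sub, Matrix.mul_one, Matrix.sub_mul, hSq2, hR]
      rwa [e] at this
    have htr1 : (X * P).trace = (Cm * R).trace := by
      calc (X * P).trace = (Sq * (Cm * (Sq * P))).trace := by
            rw [hX]; simp only [Matrix.mul_assoc]
        _ = ((Cm * (Sq * P)) * Sq).trace := trace_mul_comm _ _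
        _ = (Cm * R).trace := by rw [hR]; simp only [Matrix.mul_assoc]
    have htr2 : (Cm * R).trace
        = ∑ i, R (Sum.inl i) (Sum.inl i) - ∑ i, R (Sum.inr i) (Sum.inr i) := by
      rw [hCm]; exact myTraceCmul R
    have h1 : 0 ≤ ∑ i, R (Sum.inl i) (Sum.inl i) :=
      Finset.sum_nonneg fun i _ => myDiagNonneg hRpsd _
    have h2 : ∑ i, R (Sum.inr i) (Sum.inr i) ≤ ∑ i, Bm (Sum.inr i) (Sum.inr i) := by
      apply Finset.sum_le_sum
      intro i _
      have := myDiagNonneg hBR (Sum.inr i)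
      rw [Matrix.sub_apply] at this
      linarith
    have h3 : ∑ i, Bm (Sum.inr i) (Sum.inr i) = 2 * S.trace + 2 * Sμ.trace := by
      have e : ∀ i, Bm (Sum.inr i) (Sum.inr i) = 2 * (S i i) + 2 * (Sμ i i) := by
        intro i; rw [hBm]
        simp only [fromBlocks_apply₂₂, Matrix.add_apply, Matrix.smul_apply]
        push_cast
        ring
      rw [Finset.sum_congr rfl fun i _ => e i, Finset.sum_add_distrib, ← Finset.mul_sum,
        ← Finset.mul_sum]
      rfl
    rw [← hPeq, htr1, htr2]
    linarith
  -- Lower bound for V₂ : σ₋ ≤ (1/2) S.trace - 2 S.trace - 2 Sμ.trace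
  have hRlb : ∑ i ∈ univ.filter (fun i => hXh.eigenvalues i < 0), hXh.eigenvalues i
      ≤ (1/2) * S.trace - (2 * S.trace + 2 * Sμ.trace) := by
    set R₀ : Matrix (Fin l ⊕ Fin l) (Fin l ⊕ Fin l) ℝ :=
      fromBlocks ((1/2 : ℝ) • S) (-S) (-S) (2 • S + 2 • Sμ) with hR₀
    have hR₀psd : R₀.PosSemidef := by
      set M₀ : Matrix (Fin l ⊕ Fin l) (Fin l ⊕ Fin l) ℝ :=
        fromBlocks 1 (-((2:ℝ) • 1)) 0 1 with hM₀
      have hGpsd : (fromBlocks ((1/2 : ℝ) • S) 0 0 ((2:ℕ) • Sμ)).PosSemidef :=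
        myPsdBlocks (mySmulPsd hS.posSemidef (by norm_num)) psd2Sμ
      have conj := hGpsd.conjTranspose_mul_mul_same M₀
      have heq : M₀ᴴ * (fromBlocks ((1/2 : ℝ) • S) 0 0 ((2:ℕ) • Sμ)) * M₀ = R₀ := by
        rw [hM₀, hR₀, fromBlocks_conjTranspose, fromBlocks_multiply, fromBlocks_multiply]
        have e1 : ((1/2 : ℝ) • S) * (-((2:ℝ) • (1 : Matrix (Fin l) (Fin l) ℝ))) = -S := by
          rw [Matrix.mul_neg, Matrix.mul_smul, Matrix.mul_one]; module
        have e2 : (-((2:ℝ) • (1 : Matrix (Fin l) (Fin l) ℝ)))ᴴ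
            = -((2:ℝ) • (1 : Matrix (Fin l) (Fin l) ℝ)) := by
          simp
        rw [fromBlocks_inj]
        refine ⟨?_, ?_, ?_, ?_⟩ <;>
          simp only [e1, e2, Matrix.one_mul, Matrix.mul_one, Matrix.zero_mul, Matrix.mul_zero,
            Matrix.neg_mul, Matrix.mul_neg, Matrix.smul_mul, Matrix.mul_smul, add_zero, zero_add,
            conjTranspose_one, conjTranspose_zero, hSsymm, conjTranspose_smul,
            conjTranspose_neg, neg_neg, Matrix.one_apply] <;>
          module
      rwa [heq] at conj
    set P₀ : Matrix (Fin l ⊕ Fin l) (Fin l ⊕ Fin l) ℝ := Sq⁻¹ * R₀ * Sq⁻¹ with hP₀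
    have hP₀psd : P₀.PosSemidef := by
      have := hR₀psd.conjTranspose_mul_mul_same Sq⁻¹
      rwa [hSqih] at this
    have hBmR₀ : Bm - R₀ = fromBlocks ((3/2 : ℝ) • S) 0 0 0 := by
      rw [hBm, hR₀, sub_eq_add_neg, fromBlocks_neg, fromBlocks_add, fromBlocks_inj]
      exact ⟨by module, by module, by module, by module⟩
    have h1P₀ : (1 - P₀).PosSemidef := by
      have hpsd : (fromBlocks ((3/2 : ℝ) • S) 0 0 (0 : Matrix (Fin l) (Fin l) ℝ)).PosSemidef :=
        myPsdBlocks (mySmulPsd hS.posSemidef (by norm_num)) .zero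
      have conj := hpsd.conjTranspose_mul_mul_same Sq⁻¹
      rw [hSqih, ← hBmR₀] at conj
      have e : Sq⁻¹ * (Bm - R₀) * Sq⁻¹ = 1 - P₀ := by
        rw [Matrix.mul_sub, Matrix.sub_mul, hP₀]
        congr 1
        calc Sq⁻¹ * Bm * Sq⁻¹ = Sq⁻¹ * (Sq * Sq) * Sq⁻¹ := by rw [hSq2]
          _ = (Sq⁻¹ * Sq) * (Sq * Sq⁻¹) := by simp only [Matrix.mul_assoc]
          _ = 1 := by rw [hSqi1, hSqi2, Matrix.mul_one]
      rwa [e] at conj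
    have happ := negsum_le_trace_mul hXh hP₀psd h1P₀
    have htr1 : (X * P₀).trace = (Cm * R₀).trace := by
      have e : X * P₀ = Sq * (Cm * (R₀ * Sq⁻¹)) := by
        rw [hX, hP₀]
        calc Sq * Cm * Sq * (Sq⁻¹ * R₀ * Sq⁻¹)
            = Sq * (Cm * ((Sq * Sq⁻¹) * (R₀ * Sq⁻¹))) := by simp only [Matrix.mul_assoc]
          _ = Sq * (Cm * (R₀ * Sq⁻¹)) := by rw [hSqi1, Matrix.one_mul]
      rw [e]
      calc (Sq * (Cm * (R₀ * Sq⁻¹))).trace = ((Cm * (R₀ * Sq⁻¹)) * Sq).trace :=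
            trace_mul_comm _ _
        _ = (Cm * (R₀ * (Sq⁻¹ * Sq))).trace := by simp only [Matrix.mul_assoc]
        _ = (Cm * R₀).trace := by rw [hSqi2, Matrix.mul_one]
    have htr2 : (Cm * R₀).trace = (1/2) * S.trace - (2 * S.trace + 2 * Sμ.trace) := by
      rw [hCm, myTraceCmul R₀]
      have e1 : ∀ i, R₀ (Sum.inl i) (Sum.inl i) = (1/2) * (S i i) := by
        intro i; rw [hR₀]
        simp only [fromBlocks_apply₁₁, Matrix.smul_apply, smul_eq_mul]
      have e2 : ∀ i, R₀ (Sum.inr i) (Sum.inr i) = 2 * (S i i) + 2 * (Sμ i i) := by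
        intro i; rw [hR₀]
        simp only [fromBlocks_apply₂₂, Matrix.add_apply, Matrix.smul_apply]
        push_cast
        ring
      rw [Finset.sum_congr rfl fun i _ => e1 i, Finset.sum_congr rfl fun i _ => e2 i,
        Finset.sum_add_distrib, ← Finset.mul_sum, ← Finset.mul_sum, ← Finset.mul_sum]
      rfl
    rw [htr1, htr2] at happ
    exact happ
  -- conclude
  have htr2Sμ : ((2:ℕ) • Sμ).trace = 2 * Sμ.trace := by
    rw [two_smul, trace_add]; ring
  have hgoal1 : ((3 / 2 : ℝ) • S + 2 • Sμ).trace = (3/2) * S.trace + 2 * Sμ.trace := by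
    rw [trace_add, trace_smul, htr2Sμ, smul_eq_mul]
  have hgoal2 : ((2 : ℝ) • S + 2 • Sμ).trace = 2 * S.trace + 2 * Sμ.trace := by
    rw [trace_add, trace_smul, htr2Sμ, smul_eq_mul]
  rw [hV₂, hsum, hgoal1, hgoal2]
  constructor <;> linarith
end
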